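/- Let w = t_λ·v ∈ W⁰ (λ ∈ X, v ∈ W). Then for every positive root α ∈ R⁺ one has 0 ≤ ⟨λ,α∨⟩ ≤ ⟨ρ,α∨⟩; moreover the second inequality is strict (⟨λ,α∨⟩ < ⟨ρ,α∨⟩) if v⁻¹α ∈ R⁺, and the first one is strict (0 < ⟨λ,α∨⟩) if v⁻¹α ∈ R⁻. -/

import Mathlib

/-- A package of data and axioms encoding a finite reduced crystallographic root system
`R` spanning a real vector space `E`, with a chosen system of positive roots `Rpos`,
simple roots `simples`, coroot pairing `coroot` (so `coroot α x = ⟨x, α∨⟩`),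
Weyl group `W` (as a group of linear automorphisms of `E`), longest element `w0`,
half-sum of positive roots `rho`, and an integer `p` with `⟨ρ, α∨⟩ < p` for all
positive roots `α` (i.e. `p` is bigger than the Coxeter number). -/
structure RootSystemData (E : Type) [AddCommGroup E] [Module ℝ E] : Type where
  R : Finset E
  Rpos : Finset E
  simples : Finset E
  coroot : E → (E →ₗ[ℝ] ℝ)
  W : Subgroup (E ≃ₗ[ℝ] E)
  w0 : E ≃ₗ[ℝ] E
  rho : E
  p : ℤ
  finiteDim : FiniteDimensional ℝ E
  span_eq : Submodule.span ℝ (R : Set E) = ⊤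
  zero_not_mem : (0 : E) ∉ R
  reduced : ∀ α ∈ R, ∀ c : ℝ, c • α ∈ R → c = 1 ∨ c = -1
  rpos_subset : Rpos ⊆ R
  neg_mem : ∀ α ∈ R, -α ∈ R
  pos_iff : ∀ α ∈ R, (α ∈ Rpos ↔ -α ∉ Rpos)
  simples_subset : simples ⊆ Rpos
  pos_sum_simples : ∀ α ∈ Rpos, ∃ c : E → ℕ, α = ∑ β ∈ simples, (c β : ℝ) • β
  coroot_self : ∀ α ∈ R, coroot α α = 2
  crystallographic : ∀ α ∈ R, ∀ β ∈ R, ∃ n : ℤ, coroot α β = (n : ℝ)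
  reflection_mem : ∀ α ∈ R, ∀ β ∈ R, β - coroot α β • α ∈ R
  W_gen : W = Subgroup.closure
    {s : E ≃ₗ[ℝ] E | ∃ α ∈ R, ∀ x : E, s x = x - coroot α x • α}
  W_root_stable : ∀ v ∈ W, ∀ α ∈ R, v α ∈ R
  W_equivariant : ∀ v ∈ W, ∀ α x : E, coroot (v α) (v x) = coroot α x
  w0_mem : w0 ∈ W
  w0_neg : ∀ α ∈ Rpos, -(w0 α) ∈ Rpos
  w0_sq : w0 * w0 = 1
  nondeg : ∀ x : E, (∀ α ∈ R, coroot α x = 0) → x = 0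
  rho_def : (2 : ℝ) • rho = ∑ α ∈ Rpos, α
  rho_simple : ∀ α ∈ simples, coroot α rho = 1
  p_pos : 0 < p
  p_gt : ∀ α ∈ Rpos, coroot α rho < (p : ℝ)

namespace RootSystemData

variable {E : Type} [AddCommGroup E] [Module ℝ E] [DecidableEq E] (D : RootSystemData E)

/-- Membership in the weight lattice `X = {λ ∈ E : ⟨λ, α∨⟩ ∈ ℤ for all α ∈ R}`. -/
def IsWeight (x : E) : Prop := ∀ α ∈ D.R, ∃ n : ℤ, D.coroot α x = (n : ℝ)

/-- A weight `μ` is dominant if `⟨μ, α∨⟩ ≥ 0` for all simple roots `α`. -/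
def IsDominant (μ : E) : Prop := ∀ α ∈ D.simples, 0 ≤ D.coroot α μ

/-- A weight `μ` is restricted if `⟨μ, α∨⟩ ≤ p - 1` for all simple roots `α`. -/
def IsRestricted (μ : E) : Prop := ∀ α ∈ D.simples, D.coroot α μ ≤ (D.p : ℝ) - 1

/-- The value of the dot-action of the element `t_lam · v` of the extended affine Weyl
group `W'_aff = W ⋉ X` on the weight `0`:  `(t_lam · v) • 0 = v(0 + ρ) - ρ + p • lam`. -/
def dotZero (v : E ≃ₗ[ℝ] E) (lam : E) : E := v D.rho - D.rho + (D.p : ℝ) • lam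

/-- The condition `t_lam · v ∈ W⁰`, i.e. `(t_lam · v) • 0` is restricted and dominant
(together with the requirements `v ∈ W`, `lam ∈ X`). -/
def InW0 (v : E ≃ₗ[ℝ] E) (lam : E) : Prop :=
  v ∈ D.W ∧ D.IsWeight lam ∧ D.IsDominant (D.dotZero v lam) ∧ D.IsRestricted (D.dotZero v lam)

/-- The Iwahori–Matsumoto length of the element `w · t_x` of `W'_aff`:
`ℓ(w·t_x) = Σ_{α ∈ R⁺ ∩ w⁻¹(R⁺)} |⟨x,α∨⟩| + Σ_{α ∈ R⁺ ∩ w⁻¹(R⁻)} |1 + ⟨x,α∨⟩|`. -/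
noncomputable def len (w : E ≃ₗ[ℝ] E) (x : E) : ℝ :=
  (∑ α ∈ D.Rpos.filter (fun α => w α ∈ D.Rpos), |D.coroot α x|) +
    (∑ α ∈ D.Rpos.filter (fun α => -(w α) ∈ D.Rpos), |1 + D.coroot α x|)

/-- The length of `t_lam · v = v · t_{v⁻¹ lam}`. -/
noncomputable def lenT (v : E ≃ₗ[ℝ] E) (lam : E) : ℝ := D.len v (v.symm lam)

end RootSystemData

namespace RootSystemData

variable {E : Type} [AddCommGroup E] [Module ℝ E] [DecidableEq E] (D : RootSystemData E)

/-- The reflection in a root, as an element of `W`. -/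
lemma refl_exists {α : E} (hα : α ∈ D.R) :
    ∃ s : E ≃ₗ[ℝ] E, s ∈ D.W ∧ ∀ x : E, s x = x - D.coroot α x • α := by
  set f : E →ₗ[ℝ] E := LinearMap.id - LinearMap.smulRight (D.coroot α) α with hf
  have hfx : ∀ x, f x = x - D.coroot α x • α := fun x => rfl
  have hinv : Function.Involutive f := by
    intro x
    have h1 : D.coroot α (f x) = - D.coroot α x := by
      rw [hfx]; simp [map_sub, map_smul, D.coroot_self α hα]; ring
    rw [hfx (f x), h1, hfx]
    simp
  refine ⟨LinearEquiv.ofInvolutive f hinv, ?_, fun x => rfl⟩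
  rw [D.W_gen]
  exact Subgroup.subset_closure ⟨α, hα, fun x => rfl⟩

lemma W_setFinite : (D.W : Set (E ≃ₗ[ℝ] E)).Finite := by
  let f : ↥D.W → ({x // x ∈ D.R} → {x // x ∈ D.R}) :=
    fun v a => ⟨v.1 a.1, D.W_root_stable v.1 v.2 a.1 a.2⟩
  have hinj : Function.Injective f := by
    intro v w h
    have : (v.1 : E →ₗ[ℝ] E) = (w.1 : E →ₗ[ℝ] E) :=
      LinearMap.ext_on D.span_eq
        (fun x hx => congrArg Subtype.val (congrFun h ⟨x, hx⟩))
    exact Subtype.ext (LinearEquiv.toLinearMap_injective this)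
  haveI : Finite ↥D.W := Finite.of_injective f hinj
  exact Set.toFinite _

/-- A finset enumerating the (finite) Weyl group. -/
noncomputable def WFin : Finset (E ≃ₗ[ℝ] E) := D.W_setFinite.toFinset

lemma mem_WFin {u : E ≃ₗ[ℝ] E} : u ∈ D.WFin ↔ u ∈ D.W := Set.Finite.mem_toFinset _

section Bform
variable [FiniteDimensional ℝ E]

/-- an auxiliary positive definite form -/
noncomputable def B0 : E →ₗ[ℝ] E →ₗ[ℝ] ℝ := (Module.finBasis ℝ E).toDual

lemma B0_self (x : E) : B0 x x = ∑ i, (Module.finBasis ℝ E).repr x i * (Module.finBasis ℝ E).repr x i := by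
  set b := Module.finBasis ℝ E with hb
  have h : B0 x x = B0 x (∑ i, b.repr x i • b i) := by rw [b.sum_repr]
  rw [h, map_sum]
  simp only [map_smul, smul_eq_mul]
  refine Finset.sum_congr rfl fun i _ => ?_
  rw [show (B0 x) (b i) = b.repr x i from Module.Basis.toDual_eq_repr b x i, mul_comm]

lemma B0_self_nonneg (x : E) : 0 ≤ B0 x x := by
  rw [B0_self]; exact Finset.sum_nonneg fun i _ => mul_self_nonneg _

lemma B0_self_pos {x : E} (hx : x ≠ 0) : 0 < B0 x x := by
  rw [B0_self]
  set b := Module.finBasis ℝ E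
  have h : ∃ i, b.repr x i ≠ 0 := by
    by_contra h
    push_neg at h
    apply hx
    have : b.repr x = 0 := by ext i; exact h i
    simpa using congrArg b.repr.symm this
  obtain ⟨i, hi⟩ := h
  exact Finset.sum_pos' (fun j _ => mul_self_nonneg _) ⟨i, Finset.mem_univ i, mul_self_pos.mpr hi⟩

/-- The invariant positive definite bilinear form. -/
noncomputable def Bt : E →ₗ[ℝ] E →ₗ[ℝ] ℝ :=
  ∑ u ∈ D.WFin, LinearMap.compl₁₂ B0 (u : E →ₗ[ℝ] E) (u : E →ₗ[ℝ] E)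

lemma Bt_apply (x y : E) : D.Bt x y = ∑ u ∈ D.WFin, B0 (u x) (u y) := by
  simp [Bt, LinearMap.sum_apply, LinearMap.compl₁₂_apply]

lemma Bt_self_pos {x : E} (hx : x ≠ 0) : 0 < D.Bt x x := by
  rw [Bt_apply]
  refine Finset.sum_pos' (fun u _ => B0_self_nonneg _) ⟨1, D.mem_WFin.mpr D.W.one_mem, ?_⟩
  exact B0_self_pos hx

lemma Bt_inv {u : E ≃ₗ[ℝ] E} (hu : u ∈ D.W) (x y : E) : D.Bt (u x) (u y) = D.Bt x y := by
  rw [Bt_apply, Bt_apply]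
  refine Finset.sum_nbij' (fun w => w * u) (fun w => w * u⁻¹) ?_ ?_ ?_ ?_ ?_
  · intro w hw; exact D.mem_WFin.mpr (D.W.mul_mem (D.mem_WFin.mp hw) hu)
  · intro w hw; exact D.mem_WFin.mpr (D.W.mul_mem (D.mem_WFin.mp hw) (D.W.inv_mem hu))
  · intro w _; simp [mul_assoc]
  · intro w _; simp [mul_assoc]
  · intro w _; rfl

end Bform

end RootSystemData

namespace RootSystemData

variable {E : Type} [AddCommGroup E] [Module ℝ E] [DecidableEq E] (D : RootSystemData E)

lemma ne_zero_of_mem {α : E} (hα : α ∈ D.R) : α ≠ 0 := fun h => D.zero_not_mem (h ▸ hα)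

section Key
variable [FiniteDimensional ℝ E]

lemma coroot_key {α : E} (hα : α ∈ D.R) (x : E) :
    D.coroot α x * D.Bt α α = 2 * D.Bt x α := by
  obtain ⟨s, hsW, hs⟩ := D.refl_exists hα
  have hsα : s α = -α := by
    rw [hs, D.coroot_self α hα]
    module
  have h := D.Bt_inv hsW x α
  rw [hs, hsα] at h
  simp only [map_sub, map_smul, map_neg, LinearMap.sub_apply, LinearMap.smul_apply,
    LinearMap.neg_apply, smul_eq_mul] at h
  linarith

lemma coroot_neg {α : E} (hα : α ∈ D.R) (x : E) :
    D.coroot (-α) x = - D.coroot α x := by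
  have hnα : -α ∈ D.R := D.neg_mem α hα
  have h1 := D.coroot_key hnα x
  have h2 := D.coroot_key hα x
  simp only [map_neg, LinearMap.neg_apply, neg_neg] at h1
  have hpos : 0 < D.Bt α α := D.Bt_self_pos (D.ne_zero_of_mem hα)
  apply mul_right_cancel₀ (ne_of_gt hpos)
  nlinarith

lemma dom_nonneg {μ : E} (hμ : D.IsDominant μ) {α : E} (hα : α ∈ D.Rpos) :
    0 ≤ D.coroot α μ := by
  have hαR := D.rpos_subset hα
  obtain ⟨c, hc⟩ := D.pos_sum_simples α hα
  have hBμ : 0 ≤ D.Bt μ α := by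
    rw [hc, map_sum]
    refine Finset.sum_nonneg fun β hβ => ?_
    have hβR := D.rpos_subset (D.simples_subset hβ)
    have hkey := D.coroot_key hβR μ
    have hpos : 0 < D.Bt β β := D.Bt_self_pos (D.ne_zero_of_mem hβR)
    have hdom := hμ β hβ
    rw [map_smul, smul_eq_mul]
    have : 0 ≤ D.Bt μ β := by nlinarith
    positivity
  have hkey := D.coroot_key hαR μ
  have hpos : 0 < D.Bt α α := D.Bt_self_pos (D.ne_zero_of_mem hαR)
  nlinarith

lemma rho_pos {α : E} (hα : α ∈ D.Rpos) : 0 < D.coroot α D.rho := by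
  have hαR := D.rpos_subset hα
  obtain ⟨c, hc⟩ := D.pos_sum_simples α hα
  have hBβ : ∀ β ∈ D.simples, 0 < D.Bt D.rho β := by
    intro β hβ
    have hβR := D.rpos_subset (D.simples_subset hβ)
    have hkey := D.coroot_key hβR D.rho
    have hpos : 0 < D.Bt β β := D.Bt_self_pos (D.ne_zero_of_mem hβR)
    rw [D.rho_simple β hβ] at hkey
    nlinarith
  have hBμ : 0 < D.Bt D.rho α := by
    rw [hc, map_sum]
    simp only [map_smul, smul_eq_mul]
    by_contra hle
    push_neg at hle
    have hnn : ∀ β ∈ D.simples, 0 ≤ (c β : ℝ) * D.Bt D.rho β :=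
      fun β hβ => mul_nonneg (Nat.cast_nonneg _) (hBβ β hβ).le
    have heq : ∑ β ∈ D.simples, (c β : ℝ) * D.Bt D.rho β = 0 :=
      le_antisymm hle (Finset.sum_nonneg hnn)
    have hzero : ∀ β ∈ D.simples, (c β : ℝ) * D.Bt D.rho β = 0 :=
      (Finset.sum_eq_zero_iff_of_nonneg hnn).mp heq
    have : α = 0 := by
      rw [hc]
      refine Finset.sum_eq_zero fun β hβ => ?_
      have := hzero β hβ
      have hcβ : (c β : ℝ) = 0 := by
        rcases mul_eq_zero.mp this with h | h
        · exact h
        · exact absurd h (ne_of_gt (hBβ β hβ))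
      rw [hcβ, zero_smul]
    exact D.ne_zero_of_mem hαR this
  have hkey := D.coroot_key hαR D.rho
  have hpos : 0 < D.Bt α α := D.Bt_self_pos (D.ne_zero_of_mem hαR)
  nlinarith

end Key

end RootSystemData

namespace RootSystemData

variable {E : Type} [AddCommGroup E] [Module ℝ E] [DecidableEq E] (D : RootSystemData E)

/-- `⟨ρ, α∨⟩` is an integer for every positive root `α`. -/
lemma rho_int {α : E} (hα : α ∈ D.Rpos) : ∃ m : ℤ, D.coroot α D.rho = (m : ℝ) := by
  classical
  have hαR := D.rpos_subset hα
  set c := D.coroot α D.rho with hc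
  set s : E → E := fun x => x - D.coroot α x • α with hsdef
  have hcor_s : ∀ x : E, D.coroot α (s x) = - D.coroot α x := by
    intro x
    simp only [hsdef, map_sub, map_smul, smul_eq_mul, D.coroot_self α hαR]
    ring
  have hss : ∀ x : E, s (s x) = x := by
    intro x
    simp only [hsdef]
    rw [show D.coroot α (x - D.coroot α x • α) = - D.coroot α x from hcor_s x]
    module
  have hsneg : ∀ x : E, s (-x) = - s x := by
    intro x; simp only [hsdef, map_neg]; module
  have hsR : ∀ β ∈ D.R, s β ∈ D.R := fun β hβ => D.reflection_mem α hαR β hβ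
  -- total sum is 2c
  have h2c : ∑ β ∈ D.Rpos, D.coroot α β = 2 * c := by
    have h1 : D.coroot α ((2:ℝ) • D.rho) = 2 * c := by
      rw [map_smul, smul_eq_mul, hc]
    rw [← h1, D.rho_def, map_sum]
  -- the part where s stays positive cancels
  set N : Finset E := D.Rpos.filter (fun β => s β ∉ D.Rpos) with hN
  have hsum_M : ∑ β ∈ D.Rpos.filter (fun β => ¬ (s β ∉ D.Rpos)), D.coroot α β = 0 := by
    refine Finset.sum_involution (fun β _ => s β) ?_ ?_ ?_ ?_
    · intro β hβ
      rw [hcor_s]; ring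
    · intro β hβ hne
      intro heq
      apply hne
      have : D.coroot α β • α = 0 := by
        have := heq
        simp only [hsdef] at this
        have h0 : β - D.coroot α β • α = β := this
        linear_combination (norm := module) -h0
      rcases smul_eq_zero.mp this with h | h
      · exact h
      · exact absurd h (D.ne_zero_of_mem hαR)
    · intro β hβ
      simp only [Finset.mem_filter, not_not] at hβ ⊢
      exact ⟨hβ.2, by rw [hss]; exact hβ.1⟩
    · intro β hβ; exact hss β
  have hsum_N : ∑ β ∈ N, D.coroot α β = 2 * c := by
    rw [← h2c, ← Finset.sum_filter_add_sum_filter_not D.Rpos (fun β => s β ∉ D.Rpos), hsum_M,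
      add_zero]
  -- α itself lies in N
  have hsα : s α = -α := by
    simp only [hsdef, D.coroot_self α hαR]; module
  have hαN : α ∈ N := by
    rw [hN, Finset.mem_filter]
    exact ⟨hα, by rw [hsα]; exact (D.pos_iff α hαR).mp hα⟩
  have hsplit : ∑ β ∈ N, D.coroot α β = D.coroot α α + ∑ β ∈ N.erase α, D.coroot α β :=
    (Finset.add_sum_erase N _ hαN).symm
  -- integrality of each term
  have hint : ∀ β ∈ D.R, ∃ nb : ℤ, D.coroot α β = (nb : ℝ) := D.crystallographic α hαR
  set nn : E → ℤ := fun β => if h : ∃ nb : ℤ, D.coroot α β = (nb : ℝ) then h.choose else 0 with hnn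
  have hnnval : ∀ β ∈ D.R, D.coroot α β = (nn β : ℝ) := by
    intro β hβ
    rw [hnn]
    simp only [dif_pos (hint β hβ)]
    exact (hint β hβ).choose_spec
  have hNsubR : ∀ β ∈ N, β ∈ D.R := fun β hβ =>
    D.rpos_subset (Finset.mem_filter.mp (hN ▸ hβ)).1
  have hsum_cast : ∑ β ∈ N.erase α, D.coroot α β = ((∑ β ∈ N.erase α, nn β : ℤ) : ℝ) := by
    push_cast
    exact Finset.sum_congr rfl fun β hβ => hnnval β (hNsubR β (Finset.mem_of_mem_erase hβ))
  -- properties of φ = fun β => - s β on N.erase α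
  have hphiN : ∀ β ∈ N, -(s β) ∈ N := by
    intro β hβ
    rw [hN, Finset.mem_filter] at hβ ⊢
    have hβR := D.rpos_subset hβ.1
    have hsβR : s β ∈ D.R := hsR β hβR
    have h1 : -(s β) ∈ D.Rpos := by
      by_contra hcon
      exact hβ.2 ((D.pos_iff (s β) hsβR).mpr hcon)
    refine ⟨h1, ?_⟩
    rw [hsneg, hss]
    exact (D.pos_iff β hβR).mp hβ.1
  have hphi_ne : ∀ β ∈ N.erase α, -(s β) ≠ β := by
    intro β hβ heq
    have hβN := Finset.mem_of_mem_erase hβ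
    have hβne := Finset.ne_of_mem_erase hβ
    have hβpos : β ∈ D.Rpos := (Finset.mem_filter.mp (hN ▸ hβN)).1
    have hβR := D.rpos_subset hβpos
    -- -(β - cβ • α) = β  ⟹  cβ • α = 2 β  ⟹  (cβ/2) • α = β
    have h2 : ((1 / 2 : ℝ) * D.coroot α β) • α = β := by
      have h0 : -(β - D.coroot α β • α) = β := by rw [← hsdef] at *; exact heq
      have h1 : D.coroot α β • α = (2:ℝ) • β := by linear_combination (norm := module) h0
      have h3 := congrArg (fun z => (2:ℝ)⁻¹ • z) h1
      simp only [smul_smul] at h3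
      norm_num at h3
      exact h3
    rcases D.reduced α hαR _ (h2 ▸ hβR) with h | h
    · rw [h, one_smul] at h2; exact hβne h2.symm
    · rw [h, neg_one_smul] at h2
      have : -α ∈ D.Rpos := h2 ▸ hβpos
      exact (D.pos_iff α hαR).mp hα this
  have hphi_erase : ∀ β ∈ N.erase α, -(s β) ∈ N.erase α := by
    intro β hβ
    refine Finset.mem_erase.mpr ⟨?_, hphiN β (Finset.mem_of_mem_erase hβ)⟩
    intro heq
    have h3 := congrArg (fun y => -(s y)) heq
    beta_reduce at h3
    rw [hsneg] at h3
    rw [neg_neg] at h3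
    rw [hss] at h3
    rw [hsα, neg_neg] at h3
    exact Finset.ne_of_mem_erase hβ h3
  have hphi_cor : ∀ β ∈ N.erase α, nn (-(s β)) = nn β := by
    intro β hβ
    have hβR := hNsubR β (Finset.mem_of_mem_erase hβ)
    have hval1 : D.coroot α (-(s β)) = D.coroot α β := by
      rw [map_neg, hcor_s, neg_neg]
    have h1 := hnnval _ (D.neg_mem _ (hsR β hβR))
    have h2 := hnnval β hβR
    rw [hval1, h2] at h1
    exact_mod_cast h1.symm
  -- evenness via ZMod 2
  have heven : (2:ℤ) ∣ ∑ β ∈ N.erase α, nn β := by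
    have hz : ((∑ β ∈ N.erase α, nn β : ℤ) : ZMod 2) = 0 := by
      push_cast
      refine Finset.sum_involution (fun β _ => -(s β)) ?_ ?_ ?_ ?_
      · intro β hβ
        rw [hphi_cor β hβ]
        exact CharTwo.add_self_eq_zero _
      · intro β hβ _; exact hphi_ne β hβ
      · exact hphi_erase
      · intro β hβ
        show -s (-s β) = β
        rw [hsneg, neg_neg, hss]
    exact_mod_cast (ZMod.intCast_zmod_eq_zero_iff_dvd _ 2).mp hz
  obtain ⟨k, hk⟩ := heven
  refine ⟨1 + k, ?_⟩
  have e1 : 2 * c = 2 + ∑ β ∈ N.erase α, D.coroot α β := by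
    rw [← hsum_N, hsplit, D.coroot_self α hαR]
  rw [hsum_cast, hk] at e1
  push_cast at e1 ⊢
  linarith

end RootSystemData


/-- Let `w = t_lam · v ∈ W⁰` (`lam ∈ X`, `v ∈ W`).  Then for every
positive root `α ∈ R⁺` one has `0 ≤ ⟨lam,α∨⟩ ≤ ⟨ρ,α∨⟩`; moreover the second inequality
is strict if `v⁻¹ α ∈ R⁺`, and the first one is strict if `v⁻¹ α ∈ R⁻`. -/
theorem statement5 {E : Type} [AddCommGroup E] [Module ℝ E] [DecidableEq E]
    (D : RootSystemData E) (v : E ≃ₗ[ℝ] E) (lam : E) (h : D.InW0 v lam) :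
    ∀ α ∈ D.Rpos,
      (0 ≤ D.coroot α lam ∧ D.coroot α lam ≤ D.coroot α D.rho) ∧
      (v.symm α ∈ D.Rpos → D.coroot α lam < D.coroot α D.rho) ∧
      (-(v.symm α) ∈ D.Rpos → 0 < D.coroot α lam) := by
  haveI := D.finiteDim
  obtain ⟨hv, hlam, hdom, hres⟩ := h
  intro α hα
  have hαR := D.rpos_subset hα
  obtain ⟨n, hn⟩ := hlam α hαR
  obtain ⟨m, hm⟩ := D.rho_int hα
  have hr_pos : 0 < D.coroot α D.rho := D.rho_pos hα
  have hr_lt : D.coroot α D.rho < (D.p : ℝ) := D.p_gt α hα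
  have hp_pos : (0:ℝ) < (D.p : ℝ) := by exact_mod_cast D.p_pos
  have hvinv : v⁻¹ ∈ D.W := D.W.inv_mem hv
  have hsymmR : v.symm α ∈ D.R := D.W_root_stable v⁻¹ hvinv α hαR
  have hceq : D.coroot α (v D.rho) = D.coroot (v.symm α) D.rho := by
    have h0 := D.W_equivariant v hv (v.symm α) D.rho
    rw [v.apply_symm_apply] at h0
    exact h0
  have hmu : D.coroot α (D.dotZero v lam)
      = D.coroot (v.symm α) D.rho - D.coroot α D.rho + (D.p:ℝ) * D.coroot α lam := by
    unfold RootSystemData.dotZero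
    rw [map_add, map_sub, map_smul, hceq, smul_eq_mul]
  have h1 : 0 ≤ D.coroot α (D.dotZero v lam) := D.dom_nonneg hdom hα
  have hνdom : D.IsDominant ((D.p:ℝ) • D.rho - D.dotZero v lam - D.rho) := by
    intro β hβ
    rw [map_sub, map_sub, map_smul, smul_eq_mul, D.rho_simple β hβ]
    have := hres β hβ
    linarith
  have h2 : 0 ≤ D.coroot α ((D.p:ℝ) • D.rho - D.dotZero v lam - D.rho) := D.dom_nonneg hνdom hα
  rw [map_sub, map_sub, map_smul, smul_eq_mul, hmu] at h2
  rw [hmu] at h1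
  set t := D.coroot α lam with ht
  set r := D.coroot α D.rho with hrr
  set cc := D.coroot (v.symm α) D.rho with hcc
  by_cases hvp : v.symm α ∈ D.Rpos
  · have hc_pos : 0 < cc := D.rho_pos hvp
    have hc_lt : cc < (D.p:ℝ) := D.p_gt _ hvp
    have htr : t < r := by nlinarith
    have ht0 : 0 ≤ t := by
      have hgt : (-1 : ℝ) < t := by nlinarith
      rw [hn] at hgt ⊢
      have h3 : (-1 : ℤ) < n := by exact_mod_cast hgt
      have h4 : (0 : ℤ) ≤ n := by omega
      exact_mod_cast h4
    exact ⟨⟨ht0, htr.le⟩, fun _ => htr,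
      fun hcontra => absurd hcontra ((D.pos_iff _ hsymmR).mp hvp)⟩
  · have hnegpos : -(v.symm α) ∈ D.Rpos := by
      by_contra hcon
      exact hvp ((D.pos_iff _ hsymmR).mpr hcon)
    have hcneg : D.coroot (-(v.symm α)) D.rho = - cc := D.coroot_neg hsymmR D.rho
    have hc'_pos : 0 < D.coroot (-(v.symm α)) D.rho := D.rho_pos hnegpos
    have hc'_lt : D.coroot (-(v.symm α)) D.rho < (D.p:ℝ) := D.p_gt _ hnegpos
    have ht_pos : 0 < t := by nlinarith
    have htle : t ≤ r := by
      have h3 : t < r + 1 := by nlinarith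
      rw [hn, hm] at h3 ⊢
      have h4 : n < m + 1 := by exact_mod_cast h3
      have h5 : n ≤ m := by omega
      exact_mod_cast h5
    exact ⟨⟨ht_pos.le, htle⟩, fun hcontra => absurd hcontra hvp, fun _ => ht_pos⟩
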